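/- There exists a function g : ℤ_p → ℚ_p which is differentiable everywhere with derivative identically zero (in particular C¹), but which is not Lipschitz continuous on any neighborhood of 0 for any constant C. -/
import Mathlib

open Asymptotics Filter

/-- There is a function `g : ℤ_p → ℚ_p` (here `ℤ_p` viewed as the closed
unit ball of `ℚ_p`) which is differentiable everywhere with derivative identically zero,
but which is not Lipschitz continuous on any neighborhood of `0` for any constant. -/
theorem stmt4 (p : ℕ) [Fact p.Prime] :
    ∃ g : ℚ_[p] → ℚ_[p],
      (∀ a ∈ {x : ℚ_[p] | ‖x‖ ≤ 1}, HasDerivWithinAt g 0 {x : ℚ_[p] | ‖x‖ ≤ 1} a) ∧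
      (∀ C : ℝ, ∀ ε : ℝ, 0 < ε →
        ∃ x ∈ {x : ℚ_[p] | ‖x‖ ≤ 1}, ∃ y ∈ {x : ℚ_[p] | ‖x‖ ≤ 1},
          ‖x‖ < ε ∧ ‖y‖ < ε ∧ C * ‖x - y‖ < ‖g x - g y‖) := by
  have hp1 : (1:ℝ) < (p:ℝ) := Nat.one_lt_cast.mpr (Fact.out (p := p.Prime)).one_lt
  set q : ℚ_[p] := (p : ℚ_[p]) with hq
  have htv : ‖q‖ = (p:ℝ)⁻¹ := Padic.norm_p
  set t : ℝ := ‖q‖ with ht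
  have ht0 : 0 < t := by rw [htv]; positivity
  have ht1 : t < 1 := by rw [htv]; exact inv_lt_one_of_one_lt₀ hp1
  have hqn : ∀ n : ℕ, ‖q ^ n‖ = t ^ n := fun n => by rw [norm_pow]
  have htanti : StrictAnti (t ^ ·) := pow_right_strictAnti₀ ht0 ht1
  -- the predicate: x lies in the special ball around q^n
  set P : ℕ → ℚ_[p] → Prop := fun n x => 1 ≤ n ∧ ‖x - q ^ n‖ ≤ t ^ (3 * n) with hP
  have norm_of_P : ∀ n x, P n x → ‖x‖ = t ^ n := by
    intro n x ⟨hn1, hx⟩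
    have h3n : t ^ (3 * n) < t ^ n := htanti (by omega)
    have : ‖x - q ^ n‖ ≠ ‖q ^ n‖ := by
      rw [hqn]; exact ne_of_lt (lt_of_le_of_lt hx h3n)
    calc ‖x‖ = ‖(x - q ^ n) + q ^ n‖ := by ring_nf
    _ = max ‖x - q ^ n‖ ‖q ^ n‖ := Padic.add_eq_max_of_ne this
    _ = ‖q ^ n‖ := max_eq_right (le_of_lt (by rw [hqn]; exact lt_of_le_of_lt hx h3n))
    _ = t ^ n := hqn n
  have uniq : ∀ n m x, P n x → P m x → n = m := by
    intro n m x hn hm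
    have h1 := norm_of_P n x hn
    have h2 := norm_of_P m x hm
    exact htanti.injective (h1.symm.trans h2)
  classical
  set g : ℚ_[p] → ℚ_[p] :=
    fun x => if h : ∃ n, P n x then q ^ (2 * h.choose) else 0 with hg
  have g_eq : ∀ n x, P n x → g x = q ^ (2 * n) := by
    intro n x hn
    have h : ∃ m, P m x := ⟨n, hn⟩
    rw [hg]; simp only [dif_pos h]
    rw [uniq h.choose n x h.choose_spec hn]
  have g_eq_zero : ∀ x, (∀ n, ¬ P n x) → g x = 0 := by
    intro x hx
    rw [hg]; simp only [dif_neg (not_exists.mpr hx)]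
  have g_zero : g 0 = 0 := by
    apply g_eq_zero
    intro n ⟨hn1, h⟩
    rw [zero_sub, norm_neg, hqn] at h
    exact absurd h (not_le.mpr (htanti (by omega)))
  have g_norm_le : ∀ x, ‖g x‖ ≤ ‖x‖ ^ 2 := by
    intro x
    by_cases h : ∃ n, P n x
    · obtain ⟨n, hn⟩ := h
      rw [g_eq n x hn, hqn, norm_of_P n x hn, ← pow_mul]
      exact le_of_eq (by ring_nf)
    · rw [g_eq_zero x (not_exists.mp h)]
      simp only [norm_zero]; positivity
  refine ⟨g, ?_, ?_⟩
  · -- differentiability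
    intro a ha
    by_cases ha0 : a = 0
    · subst ha0
      rw [hasDerivWithinAt_iff_isLittleO]
      have : (fun x : ℚ_[p] => g x - g 0 - (x - 0) • (0:ℚ_[p])) = g := by
        funext x; simp [g_zero]
      rw [this]
      apply IsLittleO.mono _ nhdsWithin_le_nhds
      rw [isLittleO_iff]
      intro c hc
      filter_upwards [Metric.ball_mem_nhds (0:ℚ_[p]) hc] with x hx
      rw [Metric.mem_ball, dist_zero_right] at hx
      calc ‖g x‖ ≤ ‖x‖ ^ 2 := g_norm_le x
      _ = ‖x‖ * ‖x‖ := sq ‖x‖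
      _ ≤ c * ‖x‖ := by
          apply mul_le_mul_of_nonneg_right (le_of_lt hx) (norm_nonneg x)
      _ = c * ‖x - 0‖ := by rw [sub_zero]
    · -- locally constant near a ≠ 0
      have hloc : ∃ r > 0, ∀ x, ‖x - a‖ < r → g x = g a := by
        by_cases h : ∃ n, P n a
        · obtain ⟨n, hn⟩ := h
          refine ⟨t ^ (3 * n), by positivity, fun x hx => ?_⟩
          have hPx : P n x := by
            refine ⟨hn.1, ?_⟩
            calc ‖x - q ^ n‖ = ‖(x - a) + (a - q ^ n)‖ := by ring_nf
            _ ≤ max ‖x - a‖ ‖a - q ^ n‖ := Padic.nonarchimedean _ _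
            _ ≤ t ^ (3 * n) := max_le (le_of_lt hx) hn.2
          rw [g_eq n x hPx, g_eq n a hn]
        · push_neg at h
          have hna : 0 < ‖a‖ := norm_pos_iff.mpr ha0
          refine ⟨min ‖a‖ (‖a‖ ^ 3), by positivity, fun x hx => ?_⟩
          rw [g_eq_zero a h]
          apply g_eq_zero
          intro n hPn
          have hxn : ‖x‖ = t ^ n := norm_of_P n x hPn
          have hxa : ‖x‖ = ‖a‖ := by
            have hlt : ‖x - a‖ < ‖a‖ := lt_of_lt_of_le hx (min_le_left _ _)
            calc ‖x‖ = ‖(x - a) + a‖ := by ring_nf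
            _ = max ‖x - a‖ ‖a‖ := Padic.add_eq_max_of_ne (ne_of_lt hlt)
            _ = ‖a‖ := max_eq_right (le_of_lt hlt)
          have hPa : P n a := by
            refine ⟨hPn.1, ?_⟩
            have h3 : ‖a‖ ^ 3 = t ^ (3 * n) := by
              rw [← hxa, hxn, ← pow_mul]; ring_nf
            calc ‖a - q ^ n‖ = ‖(a - x) + (x - q ^ n)‖ := by ring_nf
            _ ≤ max ‖a - x‖ ‖x - q ^ n‖ := Padic.nonarchimedean _ _
            _ ≤ t ^ (3 * n) := by
                apply max_le _ hPn.2
                rw [norm_sub_rev]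
                exact le_of_lt (lt_of_lt_of_le hx (by rw [h3] at *; exact min_le_right _ _))
          exact h n hPa
      obtain ⟨r, hr, hconst⟩ := hloc
      have hev : g =ᶠ[nhds a] fun _ => g a := by
        filter_upwards [Metric.ball_mem_nhds a hr] with x hx
        rw [Metric.mem_ball, dist_eq_norm] at hx
        exact hconst x hx
      exact ((hasDerivAt_const a (g a)).congr_of_eventuallyEq hev).hasDerivWithinAt
  · -- not Lipschitz
    intro C ε hε
    set M : ℝ := max C 1 with hM
    have hM0 : 0 < M := lt_of_lt_of_le one_pos (le_max_right _ _)
    obtain ⟨N, hN⟩ := exists_pow_lt_of_lt_one (show (0:ℝ) < min ε M⁻¹ by positivity) ht1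
    have hNε : t ^ N < ε := lt_of_lt_of_le hN (min_le_left _ _)
    have hNM : t ^ N < M⁻¹ := lt_of_lt_of_le hN (min_le_right _ _)
    set n : ℕ := N + 1 with hn
    have hn1 : 1 ≤ n := by omega
    set x : ℚ_[p] := q ^ n with hx
    set y : ℚ_[p] := q ^ n + q ^ (3 * n - 1) with hy
    have hxnorm : ‖x‖ = t ^ n := hqn n
    have hk : 3 * n - 1 = 2 * n + N := by omega
    have hynorm : ‖y‖ = t ^ n := by
      rw [hy]
      rw [Padic.add_eq_max_of_ne (by rw [hqn, hqn]; exact ne_of_gt (htanti (by omega)))]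
      rw [hqn, hqn]
      exact max_eq_left (le_of_lt (htanti (by omega)))
    have htn1 : t ^ n ≤ 1 := pow_le_one₀ (le_of_lt ht0) (le_of_lt ht1)
    have htnε : t ^ n < ε := lt_of_le_of_lt
      (le_of_lt (htanti (by omega : N < n))) hNε
    have hgx : g x = q ^ (2 * n) := g_eq n x ⟨hn1, by rw [sub_self, norm_zero]; positivity⟩
    have hgy : g y = 0 := by
      apply g_eq_zero
      intro m hPm
      have hmn : m = n := htanti.injective (by rw [← norm_of_P m y hPm, hynorm])
      have h2 := hPm.2
      rw [hmn] at h2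
      have h3 : y - q ^ n = q ^ (3 * n - 1) := by rw [hy]; ring
      rw [h3, hqn] at h2
      exact absurd h2 (not_le.mpr (htanti (by omega)))
    have hxy : ‖x - y‖ = t ^ (3 * n - 1) := by
      rw [hx, hy]
      have : q ^ n - (q ^ n + q ^ (3 * n - 1)) = -(q ^ (3 * n - 1)) := by ring
      rw [this, norm_neg, hqn]
    refine ⟨x, by simpa [hxnorm] using htn1, y, by simpa [hynorm] using htn1,
      by rwa [hxnorm], by rwa [hynorm], ?_⟩
    rw [hxy, hgx, hgy, sub_zero, hqn, hk, pow_add]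
    have h2n : 0 < t ^ (2 * n) := by positivity
    have hCM : C ≤ M := le_max_left _ _
    have hMN : M * t ^ N < 1 := by
      have h := mul_lt_mul_of_pos_left hNM hM0
      rwa [mul_inv_cancel₀ (ne_of_gt hM0)] at h
    nlinarith [pow_nonneg (le_of_lt ht0) N, mul_le_mul_of_nonneg_right hCM
      (pow_nonneg (le_of_lt ht0) N)]
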